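/- arXiv:2504.08920 — 5 statements merged into one kernel-verified Lean document; each statement's English description precedes it below -/
import Mathlib

section
/- Let Q be a quaternion algebra over a field k of characteristic not 2, with canonical involution γ, and let z₀ be a nonzero pure quaternion with z₀² = 0. Define b_{z₀} : Qz₀ × Qz₀ → k by the condition b_{z₀}(x,y)·z₀ = γ(x)·y for x, y ∈ Qz₀ (equivalently b_{z₀}(z z₀, z' z₀) = −z₀ γ(z) z' regarded as a scalar). Then b_{z₀} is a well-defined alternating (anti-symmetric) k-bilinear form on the 2-dimensional space Qz₀. -/
open Quaternion

/-- Let `Q = ℍ[k,a,b]` be a quaternion algebra over `k`, `char k ≠ 2`,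
with canonical involution `γ = star`, and `z₀ ≠ 0` a pure quaternion with `z₀² = 0`.
There is a (well-defined) `k`-bilinear form `B` on the 2-dimensional space `Qz₀`
characterized by `B x y • z₀ = γ(x)·y`, and it is alternating (anti-symmetric). -/
theorem stmt2 (k : Type) [Field k] (h2 : (2 : k) ≠ 0) (a b : k) (ha : a ≠ 0) (hb : b ≠ 0)
    (z₀ : ℍ[k, a, b]) (hne : z₀ ≠ 0) (hpure : z₀.re = 0) (hsq : z₀ ^ 2 = 0) :
    ∃ B : ↥(LinearMap.range (LinearMap.mulRight k z₀)) →ₗ[k]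
          ↥(LinearMap.range (LinearMap.mulRight k z₀)) →ₗ[k] k,
      (∀ x y : ↥(LinearMap.range (LinearMap.mulRight k z₀)),
          B x y • z₀ = star (x : ℍ[k, a, b]) * (y : ℍ[k, a, b])) ∧
      (∀ x, B x x = 0) ∧
      (∀ x y, B x y = - B y x) := by
  classical
  have hzz : z₀ * z₀ = 0 := by rw [← sq]; exact hsq
  have hstar : star z₀ = -z₀ := by
    ext <;> simp [hpure]
  -- a self-adjoint quaternion is a scalar
  have scal : ∀ s : ℍ[k, a, b], star s = s → s = ((s.re : k) : ℍ[k, a, b]) := by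
    intro s hs
    ext
    · simp
    · have : -s.imI = s.imI := congrArg QuaternionAlgebra.imI hs
      have h0 : 2 * s.imI = 0 := by linear_combination -this
      simpa using (mul_eq_zero.mp h0).resolve_left h2
    · have : -s.imJ = s.imJ := congrArg QuaternionAlgebra.imJ hs
      have h0 : 2 * s.imJ = 0 := by linear_combination -this
      simpa using (mul_eq_zero.mp h0).resolve_left h2
    · have : -s.imK = s.imK := congrArg QuaternionAlgebra.imK hs
      have h0 : 2 * s.imK = 0 := by linear_combination -this
      simpa using (mul_eq_zero.mp h0).resolve_left h2
  -- key : z₀ * w * z₀ is a scalar multiple of z₀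
  have key : ∀ w : ℍ[k, a, b], ∃ c : k, z₀ * w * z₀ = c • z₀ := by
    intro w
    set s : ℍ[k, a, b] := z₀ * star w - w * z₀ with hsdef
    have hself : star s = s := by
      simp only [hsdef, star_sub, star_mul, star_star, hstar]
      noncomm_ring
    have hscal : s = ((s.re : k) : ℍ[k, a, b]) := scal s hself
    refine ⟨-s.re, ?_⟩
    have hw : w * z₀ = z₀ * star w - s := by rw [hsdef]; noncomm_ring
    calc z₀ * w * z₀ = z₀ * (w * z₀) := by noncomm_ring
      _ = z₀ * (z₀ * star w) - z₀ * s := by rw [hw]; noncomm_ring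
      _ = z₀ * z₀ * star w - z₀ * ((s.re : k) : ℍ[k, a, b]) := by rw [← hscal]; noncomm_ring
      _ = -(s.re • z₀) := by
          rw [hzz, QuaternionAlgebra.mul_coe_eq_smul]; simp
      _ = (-s.re) • z₀ := by rw [neg_smul]
  -- membership : star x * y is a scalar multiple of z₀
  have memkey : ∀ x y : ↥(LinearMap.range (LinearMap.mulRight k z₀)),
      ∃ c : k, star (x : ℍ[k, a, b]) * (y : ℍ[k, a, b]) = c • z₀ := by
    rintro ⟨x, u, rfl⟩ ⟨y, v, rfl⟩
    simp only [LinearMap.mulRight_apply]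
    obtain ⟨c, hc⟩ := key (star u * v)
    refine ⟨-c, ?_⟩
    have : star (u * z₀) * (v * z₀) = -(z₀ * (star u * v) * z₀) := by
      rw [star_mul, hstar]; noncomm_ring
    rw [this, hc, neg_smul]
  -- a linear functional with ℓ z₀ = 1
  obtain ⟨q, hq⟩ := (Submodule.span k {z₀}).exists_isCompl
  set e := LinearEquiv.toSpanNonzeroSingleton k (ℍ[k, a, b]) z₀ hne with he
  set ℓ : ℍ[k, a, b] →ₗ[k] k :=
    e.symm.toLinearMap ∘ₗ (Submodule.linearProjOfIsCompl _ q hq) with hℓ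
  have hmem : z₀ ∈ Submodule.span k ({z₀} : Set ℍ[k, a, b]) :=
    Submodule.mem_span_singleton_self z₀
  have hℓz : ℓ z₀ = 1 := by
    have h1 : (Submodule.linearProjOfIsCompl _ q hq) z₀ = ⟨z₀, hmem⟩ :=
      Submodule.linearProjOfIsCompl_apply_left hq ⟨z₀, hmem⟩
    have h2' : e 1 = ⟨z₀, hmem⟩ := by
      apply Subtype.ext
      simp [he, LinearEquiv.toSpanNonzeroSingleton]
    simp [hℓ, h1, ← h2']
  have hℓsmul : ∀ c : k, ℓ (c • z₀) = c := by
    intro c; rw [map_smul, hℓz, smul_eq_mul, mul_one]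
  -- define B
  set B : ↥(LinearMap.range (LinearMap.mulRight k z₀)) →ₗ[k]
      ↥(LinearMap.range (LinearMap.mulRight k z₀)) →ₗ[k] k :=
    LinearMap.mk₂ k (fun x y => ℓ (star (x : ℍ[k, a, b]) * (y : ℍ[k, a, b])))
      (by intro x x' y; simp [add_mul])
      (by intro c x y; simp [QuaternionAlgebra.star_smul, smul_mul_assoc])
      (by intro x y y'; simp [mul_add])
      (by intro c x y; simp [mul_smul_comm]) with hB
  have hchar : ∀ x y : ↥(LinearMap.range (LinearMap.mulRight k z₀)),
      B x y • z₀ = star (x : ℍ[k, a, b]) * (y : ℍ[k, a, b]) := by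
    intro x y
    obtain ⟨c, hc⟩ := memkey x y
    rw [hB, LinearMap.mk₂_apply, hc, hℓsmul]
  have halt : ∀ x, B x x = 0 := by
    intro x
    obtain ⟨c, hc⟩ := memkey x x
    have hself : star (star (x : ℍ[k, a, b]) * (x : ℍ[k, a, b]))
        = star (x : ℍ[k, a, b]) * (x : ℍ[k, a, b]) := by
      rw [star_mul, star_star]
    have hsc := scal _ hself
    have hre : (star (x : ℍ[k, a, b]) * (x : ℍ[k, a, b])).re = 0 := by
      rw [hc]; simp [hpure]
    have hz : star (x : ℍ[k, a, b]) * (x : ℍ[k, a, b]) = 0 := by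
      rw [hsc, hre]; simp
    have := hchar x x
    rw [hz] at this
    exact (smul_eq_zero.mp this).resolve_right hne
  refine ⟨B, hchar, halt, ?_⟩
  intro x y
  have h0 := halt (x + y)
  simp only [map_add, LinearMap.add_apply, halt x, halt y] at h0
  linear_combination h0
end

section
/- Let Q be a quaternion algebra over a field k of characteristic not 2, γ its canonical involution, z₀ a nonzero pure quaternion with z₀² = 0, and z an invertible pure quaternion. Define the symmetric bilinear form b_{z₀,z} on Qz₀ by b_{z₀,z}(z₁z₀, z₂z₀) = −Trd_Q(z₀ γ(z₁) z z₂). If z and z₀ anti-commute (i.e., z z₀ = −z₀ z), then b_{z₀,z} is isotropic, hence a hyperbolic plane. -/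
open Quaternion

set_option maxHeartbeats 1000000 in
/-- `Q = ℍ[k,a,b]`, `char k ≠ 2`, `z₀ ≠ 0` pure with `z₀² = 0`, `z`
an invertible pure quaternion anti-commuting with `z₀`. The symmetric bilinear form
`b(z₁z₀, z₂z₀) = −Trd(z₀ γ(z₁) z z₂)` (with `Trd q = 2*q.re`, `γ = star`) on `Qz₀`
is isotropic (the vector `z·z₀ ≠ 0` is isotropic), hence a hyperbolic plane: there is
a basis `(u·z₀, w·z₀)` of `Qz₀` with `b(u,u) = b(w,w) = 0` and `b(u,w) = 1`. -/
theorem stmt3 (k : Type) [Field k] (h2 : (2 : k) ≠ 0) (a b : k) (ha : a ≠ 0) (hb : b ≠ 0)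
    (z₀ : ℍ[k, a, b]) (hne : z₀ ≠ 0) (hpure : z₀.re = 0) (hsq : z₀ ^ 2 = 0)
    (z : ℍ[k, a, b]) (hzpure : z.re = 0) (hzinv : IsUnit z)
    (hanti : z * z₀ = -(z₀ * z)) :
    z * z₀ ≠ 0 ∧
    -(2 * (z₀ * star z * z * z).re) = 0 ∧
    ∃ u w : ℍ[k, a, b],
      LinearIndependent k ![u * z₀, w * z₀] ∧
      Submodule.span k {u * z₀, w * z₀} = LinearMap.range (LinearMap.mulRight k z₀) ∧
      -(2 * (z₀ * star u * z * u).re) = 0 ∧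
      -(2 * (z₀ * star w * z * w).re) = 0 ∧
      -(2 * (z₀ * star u * z * w).re) = 1 := by
  classical
  have hz0z0 : z₀ * z₀ = 0 := by rw [← sq]; exact hsq
  have retr : ∀ p q : ℍ[k,a,b], (p*q).re = (q*p).re := by
    intro p q; simp [QuaternionAlgebra.re_mul]; ring
  have hzz0 : z * z₀ ≠ 0 := by
    intro h
    exact hne ((hzinv.mul_right_eq_zero).mp h)
  have h0 : (z₀ * z).re = 0 := by
    have h1 : (z * z₀).re = (z₀ * z).re := retr z z₀
    rw [hanti] at h1
    have h2x : (2 : k) * (z₀ * z).re = 0 := by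
      simp only [QuaternionAlgebra.re_neg] at h1
      linear_combination -h1
    rcases mul_eq_zero.mp h2x with h | h
    · exact absurd h h2
    · exact h
  have hstarz : star z = -z := by ext <;> simp [hzpure]
  have hc : z * z = (((z*z).re : k) : ℍ[k,a,b]) := by
    ext <;> simp [QuaternionAlgebra.re_mul, QuaternionAlgebra.imI_mul,
      QuaternionAlgebra.imJ_mul, QuaternionAlgebra.imK_mul, hzpure] <;> ring
  set c := (z*z).re with hcdef
  have hc0 : c ≠ 0 := by
    intro h
    have hu : IsUnit (z * z) := hzinv.mul hzinv
    rw [hc, h] at hu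
    simp at hu
  -- choose w₀ with (z₀ * w₀).re = 1/(2*c)
  have hw0 : ∃ w₀ : ℍ[k,a,b], w₀.re = 0 ∧ (z₀ * w₀).re = 1/(2*c) := by
    by_cases hx : z₀.imI ≠ 0
    · exact ⟨⟨0, 1/(a*z₀.imI*(2*c)), 0, 0⟩, rfl, by
        simp only [QuaternionAlgebra.re_mul, hpure]
        field_simp
        ring⟩
    by_cases hy : z₀.imJ ≠ 0
    · exact ⟨⟨0, 0, 1/(b*z₀.imJ*(2*c)), 0⟩, rfl, by
        simp only [QuaternionAlgebra.re_mul, hpure]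
        field_simp
        ring⟩
    by_cases hu : z₀.imK ≠ 0
    · exact ⟨⟨0, 0, 0, -(1/(a*b*z₀.imK*(2*c)))⟩, rfl, by
        simp only [QuaternionAlgebra.re_mul, hpure]
        field_simp
        ring⟩
    · push_neg at hx hy hu
      exact absurd (by ext <;> simp [hpure, hx, hy, hu]) hne
  obtain ⟨w₀, hw₀pure, hr⟩ := hw0
  have hcr : c * (z₀ * w₀).re = 1/2 := by
    rw [hr]; field_simp
  set β := (z₀ * w₀ * z * w₀).re with hβdef
  set w := w₀ + (-β) • z with hwdef
  have hwpure : w.re = 0 := by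
    simp [hwdef, hw₀pure, hzpure]
  have hstarw : star w = -w := by ext <;> simp [hwpure]
  have hz3 : z₀ * z * z = c • z₀ := by
    rw [mul_assoc, hc, QuaternionAlgebra.mul_coe_eq_smul]
  have h12 : (z₀ * w₀ * z * z).re = 1/2 := by
    rw [mul_assoc, hc, QuaternionAlgebra.mul_coe_eq_smul]
    simpa using hcr
  have h21 : (z₀ * z * z * w₀).re = 1/2 := by
    rw [hz3, smul_mul_assoc]
    simpa using hcr
  have h22 : (z₀ * z * z * z).re = 0 := by
    rw [hz3, smul_mul_assoc]
    simp [h0]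
  have hzw_re : (z₀ * w).re = 1/(2*c) := by
    simp [hwdef, mul_add, mul_smul_comm, h0, hr]
  have hbzz : -(2 * (z₀ * star z * z * z).re) = 0 := by
    have e : z₀ * star z * z * z = -(z₀ * z * z * z) := by
      rw [hstarz]; simp [mul_neg, neg_mul]
    rw [e]; simp [h22]
  have hbzw : -(2 * (z₀ * star z * z * w).re) = 1 := by
    have e : z₀ * star z * z * w = -(c • (z₀ * w)) := by
      rw [hstarz]
      simp only [mul_neg, neg_mul]
      rw [hz3, smul_mul_assoc]
    rw [e]
    simp only [QuaternionAlgebra.re_neg, QuaternionAlgebra.re_smul, smul_eq_mul, hzw_re]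
    field_simp
  have hbww : -(2 * (z₀ * star w * z * w).re) = 0 := by
    have e : z₀ * star w * z * w = -(z₀ * w * z * w) := by
      rw [hstarw]; simp [mul_neg, neg_mul]
    have expand : (z₀ * w * z * w).re =
        β + (-β)*(1/2) + (-β)*(1/2) + (-β)*(-β)*0 := by
      rw [hwdef]
      simp only [mul_add, add_mul, mul_smul_comm, smul_mul_assoc,
        QuaternionAlgebra.re_add, QuaternionAlgebra.re_smul, smul_eq_mul,
        h12, h21, h22, ← hβdef]
      ring
    have h21' : (2:k) * (1/2) = 1 := by field_simp
    rw [e]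
    simp only [QuaternionAlgebra.re_neg, expand]
    linear_combination (-2*β) * h21'
  -- linear independence
  have hli : LinearIndependent k ![z * z₀, w * z₀] := by
    rw [LinearIndependent.pair_iff]
    intro α γ hst
    have hv : (α • z + γ • w) * z₀ = 0 := by
      rw [add_mul, smul_mul_assoc, smul_mul_assoc]; exact hst
    have h1 : (z₀ * (α • z + γ • w)).re = 0 := by
      rw [retr, hv]; simp
    have h1' : (z₀ * (α • z + γ • w)).re = γ * (1/(2*c)) := by
      simp [mul_add, mul_smul_comm, h0, hzw_re]
    have hs0 : (1/(2*c) : k) ≠ 0 := one_div_ne_zero (mul_ne_zero h2 hc0)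
    have hγ : γ = 0 := by
      rw [h1'] at h1
      rcases mul_eq_zero.mp h1 with h | h
      · exact h
      · exact absurd h hs0
    subst hγ
    simp only [zero_smul, add_zero] at hst
    rcases smul_eq_zero.mp hst with h | h
    · exact ⟨h, rfl⟩
    · exact absurd h hzz0
  refine ⟨hzz0, hbzz, z, w, hli, ?_, hbzz, hbww, hbzw⟩
  -- span = range
  have hsub : Submodule.span k {z * z₀, w * z₀} ≤ LinearMap.range (LinearMap.mulRight k z₀) := by
    rw [Submodule.span_le]
    rintro x (rfl | rfl)
    · exact ⟨z, rfl⟩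
    · exact ⟨w, rfl⟩
  have hrk : LinearMap.range (LinearMap.mulRight k z₀) ≤ LinearMap.ker (LinearMap.mulRight k z₀) := by
    rintro x ⟨q, rfl⟩
    simp only [LinearMap.mem_ker, LinearMap.mulRight_apply]
    rw [mul_assoc, hz0z0, mul_zero]
  have h4 : Module.finrank k ℍ[k,a,b] = 4 := QuaternionAlgebra.finrank_eq_four a 0 b
  have hrn := LinearMap.finrank_range_add_finrank_ker (LinearMap.mulRight k z₀)
  have hmono : Module.finrank k (LinearMap.range (LinearMap.mulRight k z₀)) ≤
      Module.finrank k (LinearMap.ker (LinearMap.mulRight k z₀)) :=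
    Submodule.finrank_mono hrk
  have hfr : Module.finrank k (LinearMap.range (LinearMap.mulRight k z₀)) ≤ 2 := by
    rw [h4] at hrn; omega
  have hset : ({z * z₀, w * z₀} : Set ℍ[k,a,b]) = Set.range ![z * z₀, w * z₀] := by
    ext x
    simp only [Set.mem_insert_iff, Set.mem_singleton_iff, Set.mem_range, Fin.exists_fin_two]
    simp
    tauto
  have hfs : Module.finrank k (Submodule.span k ({z * z₀, w * z₀} : Set ℍ[k,a,b])) = 2 := by
    rw [hset, finrank_span_eq_card hli]
    simp
  exact Submodule.eq_of_le_of_finrank_le hsub (by rw [hfs]; exact hfr)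
end

section
/- Let Q be a quaternion algebra over a field k of characteristic not 2, γ its canonical involution, z₀ a nonzero pure quaternion with z₀² = 0, and z an invertible pure quaternion such that Trd_Q(z z₀) ≠ 0. Then (z₀, z z₀) is an orthogonal k-basis of Qz₀ for the symmetric bilinear form b_{z₀,z}(z₁z₀, z₂z₀) = −Trd_Q(z₀ γ(z₁) z z₂), and with respect to this basis the form has diagonalization ⟨−Trd_Q(z z₀), Trd_Q(z z₀)·z²⟩. In particular b_{z₀,z} is isometric to the form ⟨−Trd_Q(z z₀)⟩ ⊗ ⟨1, z²⟩. -/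
open Quaternion

/-- `Q = ℍ[k,a,b]`, `char k ≠ 2`, `z₀ ≠ 0` pure with `z₀² = 0`, `z`
an invertible pure quaternion with `Trd(z·z₀) ≠ 0` (where `Trd q = 2*q.re`). Then
`(z₀, z·z₀)` is an orthogonal basis of `Qz₀` for the symmetric bilinear form
`b(z₁z₀, z₂z₀) = −Trd(z₀ γ(z₁) z z₂)`, and in this basis the form is the diagonal
form `⟨−Trd(z z₀), Trd(z z₀)·z²⟩ = ⟨−Trd(z z₀)⟩ ⊗ ⟨1, z²⟩` (here `z² = (z^2).re` is
a scalar since `z` is pure). -/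
theorem stmt4 (k : Type) [Field k] (h2 : (2 : k) ≠ 0) (a b : k) (ha : a ≠ 0) (hb : b ≠ 0)
    (z₀ : ℍ[k, a, b]) (hne : z₀ ≠ 0) (hpure : z₀.re = 0) (hsq : z₀ ^ 2 = 0)
    (z : ℍ[k, a, b]) (hzpure : z.re = 0) (hzinv : IsUnit z)
    (ht : 2 * (z * z₀).re ≠ 0) :
    -- z² is the scalar (z^2).re
    z ^ 2 = algebraMap k ℍ[k, a, b] ((z ^ 2).re) ∧
    -- (z₀, z·z₀) is a basis of Qz₀
    LinearIndependent k ![z₀, z * z₀] ∧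
    Submodule.span k {z₀, z * z₀} = LinearMap.range (LinearMap.mulRight k z₀) ∧
    -- orthogonality: b(1·z₀, z·z₀) = 0 = b(z·z₀, 1·z₀)
    -(2 * (z₀ * z * z).re) = 0 ∧
    -(2 * (z₀ * star z * z).re) = 0 ∧
    -- diagonal entries: b(z₀,z₀) = −Trd(z z₀) and b(z z₀, z z₀) = Trd(z z₀)·z²
    -(2 * (z₀ * z).re) = -(2 * (z * z₀).re) ∧
    -(2 * (z₀ * star z * z * z).re) = (2 * (z * z₀).re) * (z ^ 2).re := by
  have hstarz : star z = -z := by ext <;> simp [hzpure]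
  have hstarz₀ : star z₀ = -z₀ := by ext <;> simp [hpure]
  have hzz : z₀ * z₀ = 0 := by rw [← pow_two]; exact hsq
  have h1 : z ^ 2 = algebraMap k ℍ[k, a, b] ((z ^ 2).re) := by
    rw [QuaternionAlgebra.coe_algebraMap]
    ext <;>
      simp [pow_two, QuaternionAlgebra.re_mul, QuaternionAlgebra.imI_mul,
        QuaternionAlgebra.imJ_mul, QuaternionAlgebra.imK_mul, hzpure] <;> ring
  have hkey : z * z₀ = ((2 * (z * z₀).re : k) : ℍ[k,a,b]) + z₀ * star z := by
    have h := QuaternionAlgebra.self_add_star' (a := z * z₀)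
    rw [StarMul.star_mul, hstarz₀, neg_mul, zero_mul, add_zero] at h
    rw [← h]; abel
  have hmul : z₀ * (z * z₀) = (2 * (z * z₀).re) • z₀ := by
    conv_lhs => rw [hkey]
    rw [mul_add, ← mul_assoc, hzz, zero_mul, add_zero,
      QuaternionAlgebra.mul_coe_eq_smul]
  have hrecomm : ∀ x y : ℍ[k,a,b], (x * y).re = (y * x).re := by
    intro x y
    simp only [QuaternionAlgebra.re_mul]
    ring
  have hc : ∀ (x : ℍ[k,a,b]) (r : k), (x * (algebraMap k ℍ[k,a,b] r)).re = x.re * r := by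
    intro x r
    rw [QuaternionAlgebra.coe_algebraMap, QuaternionAlgebra.mul_coe_eq_smul]
    simp [mul_comm]
  have hLI : LinearIndependent k ![z₀, z * z₀] := by
    rw [LinearIndependent.pair_iff]
    intro s t hst
    have h0 : z₀ * (s • z₀ + t • (z * z₀)) = 0 := by rw [hst, mul_zero]
    rw [mul_add, mul_smul_comm, mul_smul_comm, hzz, smul_zero, zero_add, hmul,
      smul_smul] at h0
    have ht0 : t = 0 := by
      rcases smul_eq_zero.1 h0 with h | h
      · exact (mul_eq_zero.1 h).resolve_right ht
      · exact absurd h hne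
    subst ht0
    simp only [zero_smul, add_zero, smul_eq_zero] at hst
    exact ⟨hst.resolve_right hne, rfl⟩
  refine ⟨h1, hLI, ?_, ?_, ?_, ?_, ?_⟩
  · -- span = range via dimension count
    have hli : LinearIndependent k ![z₀, z * z₀] := hLI
    have hle : Submodule.span k {z₀, z * z₀} ≤ LinearMap.range (LinearMap.mulRight k z₀) := by
      rw [Submodule.span_le]
      rintro x (h | h)
      · exact ⟨1, (one_mul z₀).trans h.symm⟩
      · exact ⟨z, h.symm⟩
    have hker : LinearMap.range (LinearMap.mulRight k z₀) ≤
        LinearMap.ker (LinearMap.mulRight k z₀) := by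
      rintro x ⟨y, rfl⟩
      show y * z₀ * z₀ = 0
      rw [mul_assoc, hzz, mul_zero]
    have hrn := LinearMap.finrank_range_add_finrank_ker (LinearMap.mulRight k z₀)
    rw [QuaternionAlgebra.finrank_eq_four] at hrn
    have hrle := Submodule.finrank_mono hker
    have hr2 : Module.finrank k (LinearMap.range (LinearMap.mulRight k z₀)) ≤ 2 := by omega
    have hsp : Module.finrank k (Submodule.span k {z₀, z * z₀}) = 2 := by
      have hrange : Set.range ![z₀, z * z₀] = {z₀, z * z₀} := by
        simp only [Matrix.range_cons, Matrix.range_empty, Set.union_empty,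
          Set.union_singleton]
        exact Set.pair_comm _ _
      have := finrank_span_eq_card hli
      rw [hrange] at this
      simp at this
      convert this using 2
    exact Submodule.eq_of_le_of_finrank_le hle (hr2.trans_eq hsp.symm)
  · rw [mul_assoc, ← pow_two, h1, hc, hpure, zero_mul, mul_zero, neg_zero]
  · rw [hstarz, mul_neg, neg_mul, mul_assoc, ← pow_two, h1, QuaternionAlgebra.re_neg,
      hc, hpure]
    ring
  · rw [hrecomm]
  · have e : z₀ * star z * z * z = -(z₀ * z * z ^ 2) := by
      rw [hstarz, pow_two]; noncomm_ring
    rw [e, h1, QuaternionAlgebra.re_neg, hc, hrecomm z₀ z,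
      QuaternionAlgebra.coe_algebraMap, QuaternionAlgebra.re_coe]
    ring
end

section
/- Let k be a field, A a commutative-ring-valued functor on field extensions of k, F a set-valued functor, and (α_x)_{x ∈ X} a finite family of invariants in Inv(F, A) that is a strong basis: for every extension K/k, every invariant over K of F with values in A is uniquely an A(K)-linear combination of the (α_x)_K. For x̄ = (x₁,…,x_r) ∈ X^r define α_{x̄} ∈ Inv(F^r, A) by α_{x̄}(f₁,…,f_r) = ∏_{i=1}^r α_{x_i}(f_i). Then (α_{x̄})_{x̄ ∈ X^r} is a strong basis of Inv(F^r, A). -/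
open CategoryTheory

/-- The `r`-fold pointwise power `F^r` of a `Type`-valued functor `F`. -/
def powFunctor {C : Type} [Category C] (F : C ⥤ Type) (r : ℕ) : C ⥤ Type where
  obj X := Fin r → F.obj X
  map f := TypeCat.ofHom fun v i => F.map f (v i)
  map_id X := by ext v; simp
  map_comp f g := by ext v; simp

private lemma sum_cons_reindex {R : Type*} [AddCommMonoid R] {X : Type} [Fintype X] {r : ℕ}
    (g : (Fin (r + 1) → X) → R) :
    ∑ d : Fin (r + 1) → X, g d = ∑ x : X, ∑ d : Fin r → X, g (Fin.cons x d) := by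
  rw [← Equiv.sum_comp (Fin.consEquiv (fun _ : Fin (r + 1) => X)) g, Fintype.sum_prod_type]
  rfl

/-- The structure morphism of an object of `Under K`, with cleanly-stated type. -/
private def uhom {C : Type} [Category C] {K : C} (L : Under K) : K ⟶ L.right := L.hom

set_option maxHeartbeats 1600000 in
/-- Let `C` be a category of field extensions of `k`, `F` a set-valued
functor, `A` a commutative-ring-valued functor (a `Type`-valued functor whose values are
commutative rings and whose transition maps are ring homomorphisms), and `(α_x)_{x ∈ X}`
a finite family of invariants in `Inv(F, A)` which is a *strong basis*: for every
`K ∈ C`, every invariant over `K` (a natural family on the under-category of `K`) is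
uniquely an `A(K)`-linear combination of the `α_x`. For `x̄ = (x₁,…,x_r) ∈ X^r` define
`α_{x̄} ∈ Inv(F^r, A)` by `α_{x̄}(f₁,…,f_r) = ∏ᵢ α_{x_i}(f_i)`. Then
`(α_{x̄})_{x̄ ∈ X^r}` is a strong basis of `Inv(F^r, A)`. -/
theorem stmt12 {C : Type} [Category C] (F A : C ⥤ Type)
    [∀ Y : C, CommRing (A.obj Y)]
    (hA : ∀ {Y Z : C} (f : Y ⟶ Z), ∃ φ : A.obj Y →+* A.obj Z, ⇑φ = A.map f)
    (X : Type) [Fintype X]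
    (α : X → (F ⟶ A))
    (hstrong : ∀ K : C, ∀ β : ∀ L : Under K, F.obj L.right → A.obj L.right,
      (∀ (L L' : Under K) (g : L ⟶ L') (f : F.obj L.right),
        β L' (F.map g.right f) = A.map g.right (β L f)) →
      ∃! c : X → A.obj K, ∀ (L : Under K) (f : F.obj L.right),
        β L f = ∑ x : X,
          A.map (show K ⟶ L.right from L.hom) (c x) * (α x).app L.right f)
    (r : ℕ) :
    ∀ K : C, ∀ β : ∀ L : Under K, (Fin r → F.obj L.right) → A.obj L.right,
      (∀ (L L' : Under K) (g : L ⟶ L') (v : Fin r → F.obj L.right),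
        β L' (fun i => F.map g.right (v i)) = A.map g.right (β L v)) →
      ∃! c : (Fin r → X) → A.obj K, ∀ (L : Under K) (v : Fin r → F.obj L.right),
        β L v = ∑ d : Fin r → X,
          A.map (show K ⟶ L.right from L.hom) (c d)
            * ∏ i : Fin r, (α (d i)).app L.right (v i) := by
  induction r with
  | zero =>
    intro K β hβ
    refine ⟨fun _ => β (Under.mk (𝟙 K)) Fin.elim0, ?_, ?_⟩
    · intro L v
      have h := hβ (Under.mk (𝟙 K)) L (Under.homMk L.hom (by simp)) Fin.elim0
      have hv : (fun i => F.map (Under.homMk (U := Under.mk (𝟙 K)) L.hom (by simp)).right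
          (Fin.elim0 i)) = v := by funext i; exact i.elim0
      rw [hv] at h
      rw [h, Fintype.sum_unique]
      simp
    · intro c' hc'
      funext d
      have h := hc' (Under.mk (𝟙 K)) Fin.elim0
      rw [Fintype.sum_unique] at h
      simp only [Fin.prod_univ_zero, mul_one] at h
      rw [Subsingleton.elim d default, h]
      show c' default = A.map (𝟙 K) (c' default)
      rw [A.map_id]
      rfl
  | succ r IH =>
    intro K β hβ
    have hβmk : ∀ {Y : C} {q q' : K ⟶ Y} (_ : q = q') (w : Fin (r + 1) → F.obj Y),
        β (Under.mk q) w = β (Under.mk q') w := by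
      rintro Y q q' rfl w; rfl
    -- Step 1: curry off the first coordinate.
    have key : ∀ (L : Under K) (f : F.obj L.right),
        ∃! c : (Fin r → X) → A.obj L.right,
          ∀ (M : Under L.right) (v : Fin r → F.obj M.right),
            β (Under.mk (uhom L ≫ uhom M)) (Fin.cons (F.map (uhom M) f) v)
              = ∑ d : Fin r → X, A.map (uhom M) (c d)
                  * ∏ i : Fin r, (α (d i)).app M.right (v i) := by
      intro L f
      refine IH L.right
        (fun M v => β (Under.mk (uhom L ≫ uhom M)) (Fin.cons (F.map (uhom M) f) v)) ?_
      intro M M' g v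
      have hw : uhom M ≫ g.right = uhom M' := Under.w g
      have h := hβ (Under.mk (uhom L ≫ uhom M)) (Under.mk (uhom L ≫ uhom M'))
        (Under.homMk (U := Under.mk (uhom L ≫ uhom M)) (V := Under.mk (uhom L ≫ uhom M')) g.right
          (show (uhom L ≫ uhom M) ≫ g.right = uhom L ≫ uhom M' by rw [Category.assoc, hw]))
        (Fin.cons (F.map (uhom M) f) v)
      have h' : β (Under.mk (uhom L ≫ uhom M'))
            (fun i => F.map g.right (Fin.cons (α := fun _ => F.obj M.right) (F.map (uhom M) f) v i))
          = A.map g.right (β (Under.mk (uhom L ≫ uhom M)) (Fin.cons (F.map (uhom M) f) v)) := h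
      refine Eq.trans ?_ h'
      show β (Under.mk (uhom L ≫ uhom M'))
          (Fin.cons (F.map (uhom M') f) (fun i => F.map g.right (v i))) = _
      congr 1
      funext i
      refine Fin.cases ?_ (fun j => ?_) i
      · simp only [Fin.cons_zero, ← FunctorToTypes.map_comp_apply, hw]
      · simp only [Fin.cons_succ]
    choose cc hcc hcu using fun L f => key L f
    -- Step 2: naturality of the coefficients.
    have hnat : ∀ (L L' : Under K) (g : L ⟶ L') (f : F.obj L.right) (d : Fin r → X),
        cc L' (F.map g.right f) d = A.map g.right (cc L f d) := by
      intro L L' g f d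
      have hfun : (fun d => A.map g.right (cc L f d)) = cc L' (F.map g.right f) := by
        refine hcu L' (F.map g.right f) _ ?_
        intro M v
        have hw : uhom L ≫ g.right = uhom L' := Under.w g
        have h' : β (Under.mk (uhom L ≫ g.right ≫ uhom M))
              (Fin.cons (F.map (g.right ≫ uhom M) f) v)
            = ∑ d : Fin r → X, A.map (g.right ≫ uhom M) (cc L f d)
                * ∏ i : Fin r, (α (d i)).app M.right (v i) :=
          hcc L f (Under.mk (g.right ≫ uhom M)) v
        show β (Under.mk (uhom L' ≫ uhom M))
            (Fin.cons (F.map (uhom M) (F.map g.right f)) v)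
          = ∑ d : Fin r → X, A.map (uhom M) (A.map g.right (cc L f d))
              * ∏ i : Fin r, (α (d i)).app M.right (v i)
        have e2 : F.map (uhom M) (F.map g.right f) = F.map (g.right ≫ uhom M) f :=
          (FunctorToTypes.map_comp_apply F g.right (uhom M) f).symm
        rw [e2, hβmk (show uhom L' ≫ uhom M = uhom L ≫ g.right ≫ uhom M by
          rw [← hw, Category.assoc]), h']
        refine Finset.sum_congr rfl fun d _ => ?_
        rw [FunctorToTypes.map_comp_apply]
      exact (congrFun hfun d).symm
    -- Step 3: the coefficients are invariants over K; expand them in the basis.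
    have hed : ∀ d : Fin r → X, ∃! e : X → A.obj K,
        ∀ (L : Under K) (f : F.obj L.right),
          cc L f d = ∑ x : X, A.map (uhom L) (e x) * (α x).app L.right f :=
      fun d => hstrong K (fun L f => cc L f d) (fun L L' g f => hnat L L' g f d)
    choose e he heu using fun d => hed d
    refine ⟨fun d' => e (Fin.tail d') (d' 0), ?_, ?_⟩
    · -- existence
      intro L v
      show β L v = ∑ d : Fin (r + 1) → X, A.map (uhom L) (e (Fin.tail d) (d 0))
          * ∏ i : Fin (r + 1), (α (d i)).app L.right (v i)
      have h' : β (Under.mk (uhom L ≫ 𝟙 L.right))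
            (Fin.cons (F.map (𝟙 L.right) (v 0)) (Fin.tail v))
          = ∑ d : Fin r → X, A.map (𝟙 L.right) (cc L (v 0) d)
              * ∏ i : Fin r, (α (d i)).app L.right (v i.succ) :=
        hcc L (v 0) (Under.mk (𝟙 L.right)) (Fin.tail v)
      simp only [FunctorToTypes.map_id_apply, Fin.cons_self_tail] at h'
      have h'' : β L v = β (Under.mk (uhom L ≫ 𝟙 L.right)) v :=
        (hβmk (Category.comp_id (uhom L)) v).symm
      rw [h'', h', sum_cons_reindex]
      simp only [Fin.tail_cons, Fin.cons_zero, Fin.prod_univ_succ, Fin.cons_succ]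
      rw [Finset.sum_comm]
      refine Finset.sum_congr rfl fun d _ => ?_
      have h3 : cc L (v 0) d = ∑ x : X, A.map (uhom L) (e d x) * (α x).app L.right (v 0) :=
        he d L (v 0)
      rw [h3, Finset.sum_mul]
      refine Finset.sum_congr rfl fun x _ => ?_
      exact mul_assoc _ _ _
    · -- uniqueness
      intro c' hc'
      have hkey : ∀ (d : Fin r → X) (x : X), c' (Fin.cons x d) = e d x := by
        intro d x
        have hestep : ∀ (L : Under K) (f : F.obj L.right),
            cc L f d = ∑ y : X, A.map (uhom L) (c' (Fin.cons y d)) * (α y).app L.right f := by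
          intro L f
          have hccspec : (fun d : Fin r → X => ∑ y : X,
              A.map (uhom L) (c' (Fin.cons y d)) * (α y).app L.right f) = cc L f := by
            refine hcu L f _ ?_
            intro M v
            obtain ⟨φ, hφ⟩ := hA (uhom M)
            have h' : β (Under.mk (uhom L ≫ uhom M)) (Fin.cons (F.map (uhom M) f) v)
                = ∑ d' : Fin (r + 1) → X, A.map (uhom L ≫ uhom M) (c' d')
                    * ∏ i : Fin (r + 1), (α (d' i)).app M.right
                        (Fin.cons (α := fun _ => F.obj M.right) (F.map (uhom M) f) v i) :=
              hc' (Under.mk (uhom L ≫ uhom M)) (Fin.cons (F.map (uhom M) f) v)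
            show β (Under.mk (uhom L ≫ uhom M)) (Fin.cons (F.map (uhom M) f) v)
              = ∑ d : Fin r → X, A.map (uhom M)
                  (∑ y : X, A.map (uhom L) (c' (Fin.cons y d)) * (α y).app L.right f)
                  * ∏ i : Fin r, (α (d i)).app M.right (v i)
            rw [h', sum_cons_reindex]
            simp only [Fin.prod_univ_succ, Fin.cons_zero, Fin.cons_succ]
            rw [Finset.sum_comm]
            refine Finset.sum_congr rfl fun d'' _ => ?_
            rw [← hφ, map_sum, Finset.sum_mul]
            refine Finset.sum_congr rfl fun y _ => ?_
            rw [map_mul]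
            have hAcomp : A.map (uhom L ≫ uhom M) (c' (Fin.cons y d''))
                = φ (A.map (uhom L) (c' (Fin.cons y d''))) := by
              rw [hφ, FunctorToTypes.map_comp_apply]
            have hαnat : (α y).app M.right (F.map (uhom M) f)
                = φ ((α y).app L.right f) := by
              rw [hφ, FunctorToTypes.naturality]
            rw [hAcomp, hαnat]
            ring
          exact (congrFun hccspec d).symm
        have h := heu d (fun y => c' (Fin.cons y d)) hestep
        exact congrFun h x
      funext d'
      show c' d' = e (Fin.tail d') (d' 0)
      rw [← Fin.cons_self_tail d', hkey, Fin.tail_cons, Fin.cons_zero]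
end

section
/- Let Q be a split quaternion algebra over a field k of characteristic not 2 (so Q ≅ M₂(k)), with canonical symplectic involution γ. Then every nondegenerate anti-hermitian form over (Q, γ) of reduced dimension 2 corresponds, under the Morita equivalence induced by a rank-1 ideal Qz₀ (z₀ a nonzero pure quaternion with z₀² = 0) and the form b_{z₀}, to a nondegenerate 2-dimensional symmetric bilinear form over k; and in particular the elementary form ⟨z⟩_γ for an invertible pure quaternion z maps to a binary form of determinant class z²·(k×)² and, when Trd(z z₀) ≠ 0, Witt class ⟨−Trd(z z₀)⟩·⟨1, z²⟩. -/
open Quaternion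

section Helpers
variable {k : Type} [Field k] {a b : k}

lemma st19_remul (x y : ℍ[k,a,b]) : (x*y).re = (y*x).re := by
  simp [QuaternionAlgebra.re_mul]; ring

lemma st19_pure_sq (x : ℍ[k,a,b]) (hx : x.re = 0) : x * x = ((x*x).re : k) := by
  ext <;> simp [hx] <;> ring

lemma st19_L3 (z₀ u : ℍ[k,a,b]) (h : z₀.re = 0) : (z₀ * (star u * u)).re = 0 := by
  simp [h]; ring

lemma st19_star_pure (x : ℍ[k,a,b]) (hx : x.re = 0) : star x = -x := by
  ext <;> simp [hx]

lemma st19_span_eq_range (z₀ : ℍ[k,a,b]) (hsq : z₀ * z₀ = 0) (x y : ℍ[k,a,b])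
    (hx : x ∈ LinearMap.range (LinearMap.mulRight k z₀))
    (hy : y ∈ LinearMap.range (LinearMap.mulRight k z₀))
    (li : LinearIndependent k ![x, y]) :
    Submodule.span k {x, y} = LinearMap.range (LinearMap.mulRight k z₀) := by
  set f := LinearMap.mulRight k z₀ with hf
  have hle : Submodule.span k {x, y} ≤ LinearMap.range f := by
    rw [Submodule.span_le]
    rintro v (rfl | rfl)
    · exact hx
    · exact hy
  have hset : ({x, y} : Set ℍ[k,a,b]) = Set.range ![x, y] := by
    ext v
    simp [Matrix.range_cons, Matrix.range_empty, or_comm]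
  have hfin : Module.finrank k (Submodule.span k {x, y}) = 2 := by
    rw [hset, finrank_span_eq_card li]
    simp
  have hRK : LinearMap.range f ≤ LinearMap.ker f := by
    rintro v ⟨w, rfl⟩
    simp only [LinearMap.mem_ker, hf, LinearMap.mulRight_apply]
    rw [mul_assoc, hsq, mul_zero]
  have hrn : Module.finrank k (LinearMap.range f) + Module.finrank k (LinearMap.ker f)
      = 4 := by
    rw [LinearMap.finrank_range_add_finrank_ker f, QuaternionAlgebra.finrank_eq_four]
  have h1 : 2 ≤ Module.finrank k (LinearMap.range f) := by
    rw [← hfin]; exact Submodule.finrank_mono hle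
  have h2 : Module.finrank k (LinearMap.range f) ≤ Module.finrank k (LinearMap.ker f) :=
    Submodule.finrank_mono hRK
  have h3 : Module.finrank k (LinearMap.range f) ≤ 2 := by omega
  exact Submodule.eq_of_le_of_finrank_le hle (h3.trans_eq hfin.symm)

end Helpers

/-- Let `Q = ℍ[k,a,b]` be a split quaternion algebra over a field `k`
of characteristic not 2 (splitness witnessed by a nonzero pure quaternion `z₀` with
`z₀² = 0`), with canonical symplectic involution `γ = star`. Every nondegenerate
anti-hermitian form of reduced dimension 2 over `(Q,γ)` is an elementary form `⟨z⟩_γ`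
with `z` an invertible pure (skew) quaternion; under the Morita equivalence induced by
the rank-1 ideal `Qz₀` and the form `b_{z₀}`, it corresponds to the symmetric bilinear
form `b(z₁z₀,z₂z₀) = −Trd(z₀ γ(z₁) z z₂)` on the 2-dimensional space `Qz₀`
(with `Trd q = 2*q.re`), which is nondegenerate of (signed) determinant class
`z²·(k×)²`; and when `Trd(z z₀) ≠ 0` it has, in the orthogonal basis `(z₀, z z₀)`,
the diagonalization `⟨−Trd(z z₀)⟩ ⊗ ⟨1, z²⟩`. -/
theorem stmt19 (k : Type) [Field k] (h2 : (2 : k) ≠ 0) (a b : k) (ha : a ≠ 0) (hb : b ≠ 0)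
    (z₀ : ℍ[k, a, b]) (hz₀ : z₀ ≠ 0) (hp₀ : z₀.re = 0) (hsq : z₀ ^ 2 = 0) :
    ∀ z : ℍ[k, a, b], z.re = 0 → IsUnit z →
      -- the corresponding binary symmetric bilinear form is nondegenerate,
      -- of signed determinant class z²·(k×)²
      (∃ u w : ℍ[k, a, b],
        LinearIndependent k ![u * z₀, w * z₀] ∧
        Submodule.span k {u * z₀, w * z₀} = LinearMap.range (LinearMap.mulRight k z₀) ∧
        (-(2 * (z₀ * star u * z * w).re) = -(2 * (z₀ * star w * z * u).re)) ∧
        ((-(2 * (z₀ * star u * z * u).re)) * (-(2 * (z₀ * star w * z * w).re))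
            - (-(2 * (z₀ * star u * z * w).re)) * (-(2 * (z₀ * star w * z * u).re)) ≠ 0) ∧
        (∃ c : k, c ≠ 0 ∧
          -((-(2 * (z₀ * star u * z * u).re)) * (-(2 * (z₀ * star w * z * w).re))
              - (-(2 * (z₀ * star u * z * w).re)) * (-(2 * (z₀ * star w * z * u).re)))
            = (z ^ 2).re * c ^ 2)) ∧
      -- when Trd(z z₀) ≠ 0, Witt class ⟨−Trd(z z₀)⟩ ⊗ ⟨1, z²⟩ in the basis (z₀, z·z₀)
      (2 * (z * z₀).re ≠ 0 →
        LinearIndependent k ![z₀, z * z₀] ∧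
        Submodule.span k {z₀, z * z₀} = LinearMap.range (LinearMap.mulRight k z₀) ∧
        -(2 * (z₀ * z * z).re) = 0 ∧
        -(2 * (z₀ * z).re) = -(2 * (z * z₀).re) ∧
        -(2 * (z₀ * star z * z * z).re) = (2 * (z * z₀).re) * (z ^ 2).re) := by
  intro z hz hzu
  have hsq' : z₀ * z₀ = 0 := by rw [← pow_two]; exact hsq
  set n := (z * z).re with hndef
  have hzz : z * z = (n : ℍ[k,a,b]) := st19_pure_sq z hz
  have hn : n ≠ 0 := by
    intro h
    have : z * z = 0 := by rw [hzz, h]; exact QuaternionAlgebra.coe_zero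
    exact (hzu.mul hzu).ne_zero this
  have hz2re : (z ^ 2).re = n := by rw [pow_two]
  have hzzy : ∀ y : ℍ[k,a,b], z * (z * y) = n • y := by
    intro y; rw [← mul_assoc, hzz, QuaternionAlgebra.coe_mul_eq_smul]
  have hstz : star z = -z := st19_star_pure z hz
  have key : ∀ v m : ℍ[k,a,b], v * z₀ = 0 → (z₀ * m * v).re = 0 := by
    intro v m hv
    rw [st19_remul, ← mul_assoc, hv, zero_mul]
    rfl
  obtain ⟨m₀, hm₀re, hs⟩ : ∃ m : ℍ[k,a,b], m.re = 0 ∧ (z₀ * m).re ≠ 0 := by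
    by_cases hI : z₀.imI = 0
    · by_cases hJ : z₀.imJ = 0
      · by_cases hK : z₀.imK = 0
        · exact absurd (QuaternionAlgebra.ext hp₀ hI hJ hK) hz₀
        · refine ⟨⟨0,0,0,1⟩, rfl, ?_⟩
          simp only [QuaternionAlgebra.re_mul, hp₀]
          intro hcon
          exact mul_ne_zero (mul_ne_zero ha hb) hK (by linear_combination -hcon)
      · refine ⟨⟨0,0,1,0⟩, rfl, ?_⟩
        simp only [QuaternionAlgebra.re_mul, hp₀]
        intro hcon
        exact mul_ne_zero hb hJ (by linear_combination hcon)
    · refine ⟨⟨0,1,0,0⟩, rfl, ?_⟩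
      simp only [QuaternionAlgebra.re_mul, hp₀]
      intro hcon
      exact mul_ne_zero ha hI (by linear_combination hcon)
  have hstm₀ : star m₀ = -m₀ := st19_star_pure m₀ hm₀re
  set w₀ : ℍ[k,a,b] := n⁻¹ • (z * m₀) with hw₀def
  have hzw₀ : z * w₀ = m₀ := by
    rw [hw₀def, mul_smul_comm, hzzy, smul_smul, inv_mul_cancel₀ hn, one_smul]
  have hstw₀ : star w₀ = n⁻¹ • (m₀ * z) := by
    rw [hw₀def, QuaternionAlgebra.star_smul, star_mul, hstz, hstm₀]
    simp only [neg_mul, mul_neg, neg_neg]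
  have hstw₀z : star w₀ * z = m₀ := by
    rw [hstw₀, smul_mul_assoc, mul_assoc, hzz, QuaternionAlgebra.mul_coe_eq_smul,
      smul_smul, inv_mul_cancel₀ hn, one_smul]
  obtain ⟨u, hβ⟩ : ∃ u : ℍ[k,a,b], (z₀ * (star u * (z * u))).re ≠ 0 := by
    by_cases hb1 : (z₀ * z).re ≠ 0
    · exact ⟨1, by simpa using hb1⟩
    · by_cases hbw : (z₀ * (star w₀ * (z * w₀))).re ≠ 0
      · exact ⟨w₀, hbw⟩
      · refine ⟨1 + w₀, ?_⟩
        have h1 : star (1 + w₀) * (z * (1 + w₀)) = z + m₀ + m₀ + star w₀ * m₀ := by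
          rw [star_add, star_one, mul_add, mul_one, hzw₀, add_mul, one_mul, mul_add,
            hstw₀z]
          abel
        have hbw' : (z₀ * (star w₀ * (z * w₀))).re = (z₀ * (star w₀ * m₀)).re := by
          rw [hzw₀]
        have hexp : (z₀ * (star (1 + w₀) * (z * (1 + w₀)))).re
            = (z₀ * z).re + (z₀ * (star w₀ * (z * w₀))).re + 2 * (z₀ * m₀).re := by
          rw [h1, hbw']
          simp only [mul_add, QuaternionAlgebra.re_add, mul_assoc]
          ring
        rw [hexp, not_not.mp hb1, not_not.mp hbw]
        simpa using mul_ne_zero h2 hs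
  have c11 : (z₀ * star u * z * u).re = (z₀ * (star u * (z * u))).re := by
    simp only [mul_assoc]
  have c12 : (z₀ * star u * z * (z * u)).re = 0 := by
    simp only [mul_assoc, hzzy, mul_smul_comm, QuaternionAlgebra.re_smul, smul_eq_mul]
    rw [st19_L3 z₀ u hp₀, mul_zero]
  have c21 : (z₀ * star (z * u) * z * u).re = 0 := by
    rw [star_mul, hstz]
    simp only [mul_neg, neg_mul, mul_assoc, hzzy, mul_smul_comm,
      QuaternionAlgebra.re_neg, QuaternionAlgebra.re_smul, smul_eq_mul]
    rw [st19_L3 z₀ u hp₀, mul_zero, neg_zero]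
  have c22 : (z₀ * star (z * u) * z * (z * u)).re
      = -(n * (z₀ * (star u * (z * u))).re) := by
    rw [star_mul, hstz]
    simp only [mul_neg, neg_mul, mul_assoc, hzzy, mul_smul_comm,
      QuaternionAlgebra.re_neg, QuaternionAlgebra.re_smul, smul_eq_mul]
  have li1 : LinearIndependent k ![u * z₀, (z * u) * z₀] := by
    rw [LinearIndependent.pair_iff]
    intro s t hst
    have hv : (s • u + t • (z * u)) * z₀ = 0 := by
      rw [add_mul, smul_mul_assoc, smul_mul_assoc]; exact hst
    have e1 := key _ (star u * z) hv
    have e2 := key _ (star (z * u) * z) hv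
    simp only [mul_add, mul_smul_comm, QuaternionAlgebra.re_add,
      QuaternionAlgebra.re_smul, smul_eq_mul, mul_assoc] at e1 e2
    rw [show z₀ * (star u * (z * (z * u))) = z₀ * star u * z * (z * u) by
          simp only [mul_assoc]] at e1
    rw [c12] at e1
    rw [show z₀ * (star (z * u) * (z * u)) = z₀ * star (z * u) * z * u by
          simp only [mul_assoc],
        show z₀ * (star (z * u) * (z * (z * u))) = z₀ * star (z * u) * z * (z * u) by
          simp only [mul_assoc]] at e2
    rw [c21, c22] at e2
    have hs0 : s = 0 := by
      rcases mul_eq_zero.mp (show s * (z₀ * (star u * (z * u))).re = 0 by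
        linear_combination e1) with h | h
      · exact h
      · exact absurd h hβ
    refine ⟨hs0, ?_⟩
    rw [hs0] at e2
    rcases mul_eq_zero.mp (show t * (n * (z₀ * (star u * (z * u))).re) = 0 by
        linear_combination -e2) with h | h
    · exact h
    · exact absurd h (mul_ne_zero hn hβ)
  constructor
  · refine ⟨u, z * u, li1, ?_, ?_, ?_, ?_⟩
    · exact st19_span_eq_range z₀ hsq' _ _ ⟨u, rfl⟩ ⟨z * u, rfl⟩ li1
    · rw [c12, c21]
    · rw [c11, c12, c21, c22]
      rw [show -(2 * (z₀ * (star u * (z * u))).re) * -(2 * -(n * (z₀ * (star u * (z * u))).re))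
            - -(2 * (0:k)) * -(2 * 0)
          = -(n * (2 * (z₀ * (star u * (z * u))).re) ^ 2) from by ring]
      exact neg_ne_zero.mpr (mul_ne_zero hn (pow_ne_zero 2 (mul_ne_zero h2 hβ)))
    · refine ⟨2 * (z₀ * (star u * (z * u))).re, mul_ne_zero h2 hβ, ?_⟩
      rw [c11, c12, c21, c22, hz2re]
      ring
  · intro ht
    have htre : (z * z₀).re ≠ 0 := fun h => ht (by rw [h, mul_zero])
    have li2 : LinearIndependent k ![z₀, z * z₀] := by
      rw [LinearIndependent.pair_iff]
      intro s t hst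
      have hv : (s • (1:ℍ[k,a,b]) + t • z) * z₀ = 0 := by
        rw [add_mul, smul_mul_assoc, smul_mul_assoc, one_mul]; exact hst
      have e1 := key _ 1 hv
      simp only [mul_one, mul_add, mul_smul_comm, QuaternionAlgebra.re_add,
        QuaternionAlgebra.re_smul, smul_eq_mul, hp₀] at e1
      rw [st19_remul z₀ z] at e1
      have ht0 : t = 0 := by
        rcases mul_eq_zero.mp (show t * (z * z₀).re = 0 by linear_combination e1) with h | h
        · exact h
        · exact absurd h htre
      refine ⟨?_, ht0⟩
      rw [ht0, zero_smul, add_zero] at hst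
      exact (smul_eq_zero.mp hst).resolve_right hz₀
    refine ⟨li2, ?_, ?_, ?_, ?_⟩
    · exact st19_span_eq_range z₀ hsq' _ _ ⟨1, one_mul z₀⟩ ⟨z, rfl⟩ li2
    · rw [mul_assoc, hzz, QuaternionAlgebra.mul_coe_eq_smul]
      simp [hp₀]
    · rw [st19_remul]
    · rw [hstz]
      simp only [mul_neg, neg_mul, mul_assoc, hzzy, mul_smul_comm,
        QuaternionAlgebra.re_neg, QuaternionAlgebra.re_smul, smul_eq_mul]
      rw [st19_remul z₀ z, hz2re]
      ring
end
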